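/- If K is an algebraically closed field and G is a divisible linearly ordered abelian group, then the Hahn series field K((t^G)) is algebraically closed. -/

import Mathlib

open Polynomial HahnSeries Finset

namespace HahnAC

variable {K : Type u} [Field K] {G : Type v} [AddCommGroup G] [LinearOrder G] [IsOrderedAddMonoid G]

local notation "𝕂" => HahnSeries G K

/-! ### orderTop basics -/

theorem lt_orderTop_iff' {x : 𝕂} {d : G} :
    (d : WithTop G) < x.orderTop ↔ ∀ g ≤ d, x.coeff g = 0 := by
  constructor
  · intro h g hg
    exact HahnSeries.coeff_eq_zero_of_lt_orderTop (lt_of_le_of_lt (WithTop.coe_le_coe.2 hg) h)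
  · intro h
    by_cases hx : x = 0
    · simp [hx]
    · rw [HahnSeries.orderTop_of_ne_zero hx, WithTop.coe_lt_coe]
      by_contra hc
      push_neg at hc
      exact (x.isWF_support.min_mem (HahnSeries.support_nonempty_iff.2 hx)) (h _ hc)

theorem le_orderTop_iff' {x : 𝕂} {d : G} :
    (d : WithTop G) ≤ x.orderTop ↔ ∀ g < d, x.coeff g = 0 := by
  constructor
  · intro h g hg
    exact HahnSeries.coeff_eq_zero_of_lt_orderTop (lt_of_lt_of_le (WithTop.coe_lt_coe.2 hg) h)
  · intro h
    by_cases hx : x = 0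
    · simp [hx]
    · rw [HahnSeries.orderTop_of_ne_zero hx, WithTop.coe_le_coe]
      by_contra hc
      push_neg at hc
      exact (x.isWF_support.min_mem (HahnSeries.support_nonempty_iff.2 hx)) (h _ hc)

theorem sum_coeff {ι : Type*} (s : Finset ι) (f : ι → 𝕂) (g : G) :
    (∑ i ∈ s, f i).coeff g = ∑ i ∈ s, (f i).coeff g := by
  induction s using Finset.cons_induction with
  | empty => simp
  | cons a s ha ih => simp [Finset.sum_cons, HahnSeries.coeff_add, ih]

theorem le_add_orderTop_sum {ι : Type*} {s : Finset ι} {f : ι → 𝕂} {d e : WithTop G}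
    (h : ∀ i ∈ s, d ≤ e + (f i).orderTop) : d ≤ e + (∑ i ∈ s, f i).orderTop := by
  induction s using Finset.cons_induction with
  | empty => simp
  | cons a s ha ih =>
    rw [Finset.sum_cons]
    have hmin : min (f a).orderTop (∑ i ∈ s, f i).orderTop ≤ (f a + ∑ i ∈ s, f i).orderTop :=
      HahnSeries.min_orderTop_le_orderTop_add
    refine le_trans ?_ (add_le_add_right hmin e)
    rcases le_total (f a).orderTop (∑ i ∈ s, f i).orderTop with hle | hle
    · rw [min_eq_left hle]; exact h a (Finset.mem_cons_self a s)
    · rw [min_eq_right hle]; exact ih fun i hi => h i (Finset.mem_cons_of_mem hi)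

theorem le_orderTop_sum {ι : Type*} {s : Finset ι} {f : ι → 𝕂} {d : WithTop G}
    (h : ∀ i ∈ s, d ≤ (f i).orderTop) : d ≤ (∑ i ∈ s, f i).orderTop := by
  have := le_add_orderTop_sum (e := (0 : WithTop G)) (f := f) (s := s) (d := d) ?_
  · simpa using this
  · intro i hi; simpa using h i hi

theorem lt_orderTop_sum {ι : Type*} {s : Finset ι} {f : ι → 𝕂} {d : WithTop G}
    (hd : d ≠ ⊤) (h : ∀ i ∈ s, d < (f i).orderTop) : d < (∑ i ∈ s, f i).orderTop := by
  induction s using Finset.cons_induction with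
  | empty => simpa using lt_top_iff_ne_top.2 hd
  | cons a s ha ih =>
    rw [Finset.sum_cons]
    refine lt_of_lt_of_le ?_ HahnSeries.min_orderTop_le_orderTop_add
    exact lt_min (h a (Finset.mem_cons_self a s)) (ih fun i hi => h i (Finset.mem_cons_of_mem hi))

theorem le_orderTop_pow {y : 𝕂} {d : G} (h : (d : WithTop G) ≤ y.orderTop) (i : ℕ) :
    ((i • d : G) : WithTop G) ≤ (y ^ i).orderTop := by
  induction i with
  | zero => simp [HahnSeries.orderTop_one]
  | succ i ih =>
    rw [pow_succ, succ_nsmul, WithTop.coe_add]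
    exact le_trans (add_le_add ih h) HahnSeries.orderTop_add_le_mul

theorem le_orderTop_mul_pow {c y : 𝕂} {d : G} (h : (d : WithTop G) ≤ y.orderTop) (i : ℕ) :
    c.orderTop + ((i • d : G) : WithTop G) ≤ (c * y ^ i).orderTop := by
  exact le_trans (add_le_add_right (le_orderTop_pow h i) _)
    HahnSeries.orderTop_add_le_mul

theorem orderTop_le_orderTop_natsmul (m : ℕ) (x : 𝕂) :
    x.orderTop ≤ (m • x).orderTop := by
  rw [← Nat.cast_smul_eq_nsmul K m x]
  exact not_lt.1 (HahnSeries.orderTop_smul_not_lt _ _)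

theorem mul_single_coeff (y : 𝕂) (s : G) (r : K) (g : G) :
    (y * single s r).coeff g = y.coeff (g - s) * r := by
  have := HahnSeries.coeff_mul_single_add (r := r) (x := y) (a := g - s) (b := s)
  rwa [sub_add_cancel] at this

/-! ### Taylor expansion of polynomial evaluation -/

theorem eval_eq_taylor_sum (p : Polynomial 𝕂) (x z : 𝕂) :
    p.eval z = ∑ i ∈ range (p.natDegree + 1), (taylor x p).coeff i * (z - x) ^ i := by
  have h1 : p.eval z = (taylor x p).eval (z - x) := by
    rw [taylor_eval, sub_add_cancel]
  rw [h1, eval_eq_sum_range' (n := p.natDegree + 1)]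
  rw [natDegree_taylor]
  omega

theorem taylor_coeff_expand (p : Polynomial 𝕂) (x z : 𝕂) (i : ℕ) :
    (taylor z p).coeff i = ∑ m ∈ range (p.natDegree + 1),
      ((m + i).choose i) • ((taylor x p).coeff (m + i)) * (z - x) ^ m := by
  have h1 : taylor z p = taylor (z - x) (taylor x p) := by
    rw [taylor_taylor, sub_add_cancel]
  rw [h1, taylor_coeff, eval_eq_sum_range' (n := p.natDegree + 1)]
  · refine Finset.sum_congr rfl fun m _ => ?_
    rw [hasseDeriv_coeff, nsmul_eq_mul]
  · calc (hasseDeriv i (taylor x p)).natDegree ≤ (taylor x p).natDegree - i :=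
          natDegree_hasseDeriv_le _ _
      _ < p.natDegree + 1 := by
          have h := Nat.sub_le (taylor x p).natDegree i
          rw [natDegree_taylor] at h ⊢; omega

/-- Admissibility of a slope `δ` at `x`. -/
def Adm (p : Polynomial 𝕂) (x : 𝕂) (δ : G) : Prop :=
  ∀ j : ℕ, (p.eval x).orderTop ≤ ((j • δ : G) : WithTop G) + ((taylor x p).coeff j).orderTop

theorem adm_eval_le {p : Polynomial 𝕂} {x z : 𝕂} {δ : G} (hadm : Adm p x δ)
    (hz : (δ : WithTop G) ≤ (z - x).orderTop) :
    (p.eval x).orderTop ≤ (p.eval z).orderTop := by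
  conv_rhs => rw [eval_eq_taylor_sum p x z]
  refine le_orderTop_sum fun i _ => ?_
  calc (p.eval x).orderTop ≤ ((i • δ : G) : WithTop G) + ((taylor x p).coeff i).orderTop :=
        hadm i
    _ = ((taylor x p).coeff i).orderTop + ((i • δ : G) : WithTop G) := add_comm _ _
    _ ≤ ((taylor x p).coeff i * (z - x) ^ i).orderTop := le_orderTop_mul_pow hz i

theorem grow {p : Polynomial 𝕂} {x z : 𝕂} {δ : G}
    (hx : p.eval x ≠ 0)
    (hz : (δ : WithTop G) ≤ (z - x).orderTop)
    (hlt : (p.eval x).orderTop < (p.eval z).orderTop) :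
    ∃ i : ℕ, 1 ≤ i ∧ i ≤ p.natDegree ∧
      ((i • δ : G) : WithTop G) + ((taylor z p).coeff i).orderTop ≤ (p.eval x).orderTop := by
  by_contra hcon
  push_neg at hcon
  have hxz : (δ : WithTop G) ≤ (x - z).orderTop := by
    rw [show x - z = -(z - x) by ring, HahnSeries.orderTop_neg]; exact hz
  have hd : (p.eval x).orderTop ≠ ⊤ := fun h => hx (HahnSeries.orderTop_eq_top.1 h)
  have : (p.eval x).orderTop < (p.eval x).orderTop := by
    conv_rhs => rw [eval_eq_taylor_sum p z x]
    refine lt_orderTop_sum hd fun i hi => ?_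
    rcases Nat.eq_zero_or_pos i with rfl | hi1
    · simpa [taylor_coeff_zero] using hlt
    · have hin : i ≤ p.natDegree := by
        have := Finset.mem_range.1 hi; omega
      calc (p.eval x).orderTop
          < ((i • δ : G) : WithTop G) + ((taylor z p).coeff i).orderTop := hcon i hi1 hin
        _ = ((taylor z p).coeff i).orderTop + ((i • δ : G) : WithTop G) := add_comm _ _
        _ ≤ ((taylor z p).coeff i * (x - z) ^ i).orderTop := le_orderTop_mul_pow hxz i
  exact lt_irrefl _ this

theorem exists_slope (hdiv : ∀ (g : G) (n : ℕ), 0 < n → ∃ h : G, n • h = g)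
    [IsAlgClosed K]
    {p : Polynomial 𝕂} (hp : p.Monic) (hn : 0 < p.natDegree) (x : 𝕂) (hx : p.eval x ≠ 0) :
    ∃ (γ : G) (z : 𝕂), Adm p x γ ∧
      (∀ (δ : G) (i : ℕ), 1 ≤ i → i ≤ p.natDegree →
        ((i • δ : G) : WithTop G) + ((taylor x p).coeff i).orderTop < (p.eval x).orderTop →
          δ < γ) ∧
      (γ : WithTop G) ≤ (z - x).orderTop ∧
      (p.eval x).orderTop < (p.eval z).orderTop := by
  classical
  set n := p.natDegree with hn'
  set q := taylor x p with hqdef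
  have hq0 : q.coeff 0 = p.eval x := taylor_coeff_zero x p
  have hqnat : q.natDegree = n := natDegree_taylor p x
  have hqn : q.coeff n = 1 := by
    rw [← hqnat, coeff_natDegree, hqdef, taylor_apply, leadingCoeff_comp, hp.leadingCoeff,
      (monic_X_add_C x).leadingCoeff, one_pow, one_mul]
    rw [natDegree_X_add_C]; exact one_ne_zero
  set d0 := (p.eval x).order with hd0
  have hvp : (p.eval x).orderTop = (d0 : WithTop G) :=
    (HahnSeries.order_eq_orderTop_of_ne_zero hx).symm
  set S := (Finset.Icc 1 n).filter (fun i => q.coeff i ≠ 0) with hSdef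
  have hnS : n ∈ S := by
    rw [hSdef, Finset.mem_filter, Finset.mem_Icc, hqn]
    exact ⟨⟨hn, le_refl n⟩, one_ne_zero⟩
  set sl : ℕ → G := fun i =>
    if hi : 0 < i then (hdiv (d0 - (q.coeff i).order) i hi).choose else 0 with hsldef
  have hsl : ∀ i ∈ S, i • sl i = d0 - (q.coeff i).order := by
    intro i hi
    have h1 : 0 < i := (Finset.mem_Icc.1 (Finset.mem_filter.1 hi).1).1
    simp only [hsldef, dif_pos h1]
    exact (hdiv (d0 - (q.coeff i).order) i h1).choose_spec
  have hne : (S.image sl).Nonempty := ⟨sl n, Finset.mem_image_of_mem _ hnS⟩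
  set γ : G := (S.image sl).max' hne with hγdef
  obtain ⟨i₀, hi₀S, hi₀⟩ := Finset.mem_image.1 ((S.image sl).max'_mem hne)
  rw [← hγdef] at hi₀
  have hle : ∀ i ∈ S, sl i ≤ γ := fun i hi =>
    Finset.le_max' _ _ (Finset.mem_image_of_mem _ hi)
  -- admissibility
  have hadm : Adm p x γ := by
    intro j
    rcases Nat.eq_zero_or_pos j with rfl | hj1
    · rw [← hqdef, hq0, zero_smul]
      simp
    by_cases hcj : q.coeff j = 0
    · rw [← hqdef, hcj]
      simp
    have hjS : j ∈ S := by
      rw [hSdef, Finset.mem_filter, Finset.mem_Icc]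
      exact ⟨⟨hj1, hqnat ▸ le_natDegree_of_ne_zero hcj⟩, hcj⟩
    have hkey : d0 ≤ j • γ + (q.coeff j).order := by
      have h2 : j • sl j ≤ j • γ := nsmul_le_nsmul_right (hle j hjS) j
      have h3 := hsl j hjS
      have : d0 = j • sl j + (q.coeff j).order := by rw [h3, sub_add_cancel]
      rw [this]
      exact add_le_add_left h2 _
    rw [← hqdef, hvp, ← HahnSeries.order_eq_orderTop_of_ne_zero hcj, ← WithTop.coe_add,
      WithTop.coe_le_coe]
    exact hkey
  -- maximality
  have hmax : ∀ (δ : G) (i : ℕ), 1 ≤ i → i ≤ n →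
      ((i • δ : G) : WithTop G) + ((taylor x p).coeff i).orderTop < (p.eval x).orderTop →
        δ < γ := by
    intro δ i h1 h2 hlt
    by_cases hci : q.coeff i = 0
    · rw [← hqdef, hci] at hlt
      simp at hlt
    have hiS : i ∈ S := by
      rw [hSdef, Finset.mem_filter, Finset.mem_Icc]
      exact ⟨⟨h1, h2⟩, hci⟩
    rw [← hqdef, hvp, ← HahnSeries.order_eq_orderTop_of_ne_zero hci, ← WithTop.coe_add,
      WithTop.coe_lt_coe] at hlt
    have h3 : i • δ < i • sl i := by
      have := hsl i hiS
      have h4 : i • δ < d0 - (q.coeff i).order := by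
        have := lt_tsub_iff_right.2 hlt
        exact this
      rw [← this] at h4
      exact h4
    have h5 : δ < sl i := lt_of_nsmul_lt_nsmul_right _ h3
    exact lt_of_lt_of_le h5 (hle i hiS)
  -- the residue polynomial and its root
  set r : Polynomial K :=
    ∑ i ∈ range (n + 1), Polynomial.C ((q.coeff i).coeff (d0 - i • γ)) * X ^ i with hrdef
  have hcr : ∀ j, j ≤ n → r.coeff j = (q.coeff j).coeff (d0 - j • γ) := by
    intro j hj
    rw [hrdef, finset_sum_coeff]
    rw [Finset.sum_eq_single j]
    · simp [coeff_C_mul, coeff_X_pow]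
    · intro i _ hij
      simp [coeff_C_mul, coeff_X_pow, Ne.symm hij]
    · intro hj'
      exact absurd (Finset.mem_range.2 (by omega)) hj'
  have hc00 : r.coeff 0 ≠ 0 := by
    rw [hcr 0 (Nat.zero_le n), zero_smul, sub_zero, hq0]
    rw [← HahnSeries.leadingCoeff_eq]
    exact HahnSeries.leadingCoeff_ne_zero.2 hx
  have hi₀1 : 1 ≤ i₀ := (Finset.mem_Icc.1 (Finset.mem_filter.1 hi₀S).1).1
  have hi₀n : i₀ ≤ n := (Finset.mem_Icc.1 (Finset.mem_filter.1 hi₀S).1).2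
  have hci₀ : q.coeff i₀ ≠ 0 := (Finset.mem_filter.1 hi₀S).2
  have hcri₀ : r.coeff i₀ ≠ 0 := by
    rw [hcr i₀ hi₀n]
    have : d0 - i₀ • γ = (q.coeff i₀).order := by
      rw [← hi₀, hsl i₀ hi₀S, sub_sub_cancel]
    rw [this, ← HahnSeries.leadingCoeff_eq]
    exact HahnSeries.leadingCoeff_ne_zero.2 hci₀
  have hdeg : r.degree ≠ 0 := by
    intro hdeg
    have h1 := le_degree_of_ne_zero hcri₀
    rw [hdeg] at h1
    have : i₀ ≤ 0 := by exact_mod_cast h1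
    omega
  obtain ⟨a, ha⟩ := IsAlgClosed.exists_root r hdeg
  have ha' : r.eval a = 0 := ha
  have ha0 : a ≠ 0 := by
    rintro rfl
    rw [← coeff_zero_eq_eval_zero] at ha'
    exact hc00 ha'
  -- the improved point
  refine ⟨γ, x + single γ a, hadm, hmax, ?_, ?_⟩
  · rw [add_sub_cancel_left, HahnSeries.orderTop_single ha0]
  · rw [hvp]
    refine lt_orderTop_iff'.2 fun g hg => ?_
    rw [eval_eq_taylor_sum p x (x + single γ a), add_sub_cancel_left, ← hn', ← hqdef,
      sum_coeff]
    have hterm : ∀ i, (q.coeff i * single γ a ^ i).coeff g =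
        (q.coeff i).coeff (g - i • γ) * a ^ i := by
      intro i
      rw [HahnSeries.single_pow, mul_single_coeff]
    rcases lt_or_eq_of_le hg with hg | hg
    · refine Finset.sum_eq_zero fun i _ => ?_
      rw [hterm i]
      by_cases hci : q.coeff i = 0
      · rw [hci]; simp
      have hadm' := hadm i
      rw [← hqdef, hvp, ← HahnSeries.order_eq_orderTop_of_ne_zero hci, ← WithTop.coe_add,
        WithTop.coe_le_coe] at hadm'
      have hlt2 : g - i • γ < (q.coeff i).order := by
        have : g - i • γ < d0 - i • γ := by exact sub_lt_sub_right hg _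
        refine lt_of_lt_of_le this ?_
        exact tsub_le_iff_right.2 (by rwa [add_comm] at hadm')
      rw [HahnSeries.coeff_eq_zero_of_lt_orderTop, zero_mul]
      rw [← HahnSeries.order_eq_orderTop_of_ne_zero hci, WithTop.coe_lt_coe]
      exact hlt2
    · subst hg
      have := ha'
      rw [hrdef, eval_finset_sum] at this
      simp only [eval_mul, eval_C, eval_pow, eval_X] at this
      rw [← this]
      exact Finset.sum_congr rfl fun i _ => by rw [hterm i]

/-! ### Spherical completeness -/

theorem spherically_complete {ι : Type w} [Nonempty ι] (x : ι → 𝕂) (ρ : ι → G)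
    (hchain : ∀ i j, ρ i ≤ ρ j → ((ρ i : WithTop G)) ≤ (x j - x i).orderTop) :
    ∃ y : 𝕂, ∀ i, ((ρ i : WithTop G)) ≤ (y - x i).orderTop := by
  classical
  have hagree : ∀ (i j : ι) (g : G), g < ρ i → g < ρ j → (x i).coeff g = (x j).coeff g := by
    have key : ∀ (i j : ι) (g : G), g < ρ i → ρ i ≤ ρ j → (x i).coeff g = (x j).coeff g := by
      intro i j g hi hle
      have hc : (x j - x i).coeff g = 0 :=
        HahnSeries.coeff_eq_zero_of_lt_orderTop
          (lt_of_lt_of_le (WithTop.coe_lt_coe.2 hi) (hchain i j hle))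
      rw [HahnSeries.coeff_sub, sub_eq_zero] at hc
      exact hc.symm
    intro i j g hi hj
    rcases le_total (ρ i) (ρ j) with h | h
    · exact key i j g hi h
    · exact (key j i g hj h).symm
  set f : G → K := fun g => if h : ∃ i, g < ρ i then (x h.choose).coeff g else 0 with hfdef
  have hf : ∀ (g : G) (i : ι), g < ρ i → f g = (x i).coeff g := by
    intro g i hgi
    have hex : ∃ i, g < ρ i := ⟨i, hgi⟩
    simp only [hfdef, dif_pos hex]
    exact hagree hex.choose i g hex.choose_spec hgi
  have hsupp : (Function.support f).IsWF := by
    rw [Set.isWF_iff_no_descending_seq]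
    intro u hu hmem
    have h0 : ∃ i, u 0 < ρ i := by
      by_contra h
      have hz : f (u 0) = 0 := dif_neg h
      exact hmem 0 hz
    obtain ⟨i0, hi0⟩ := h0
    have hmem' : ∀ k : ℕ, u k ∈ (x i0).support := by
      intro k
      have hki0 : u k < ρ i0 := lt_of_le_of_lt (hu.antitone (Nat.zero_le k)) hi0
      have hk : f (u k) ≠ 0 := hmem k
      rw [hf (u k) i0 hki0] at hk
      exact hk
    exact Set.isWF_iff_no_descending_seq.1 (x i0).isWF_support u hu hmem'
  set y : 𝕂 := ⟨f, hsupp.isPWO⟩ with hydef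
  refine ⟨y, fun i => ?_⟩
  rw [le_orderTop_iff']
  intro g hg
  rw [HahnSeries.coeff_sub]
  have : y.coeff g = f g := rfl
  rw [this, hf g i hg, sub_self]

end HahnAC

namespace HahnAC

theorem main {K : Type u} [Field K] [IsAlgClosed K] {G : Type v} [AddCommGroup G] [LinearOrder G]
    [IsOrderedAddMonoid G]
    (hdiv : ∀ (g : G) (n : ℕ), 0 < n → ∃ h : G, n • h = g) :
    IsAlgClosed (HahnSeries G K) := by
  classical
  apply IsAlgClosed.of_exists_root
  intro p hmonic hirr
  by_contra hroot
  push_neg at hroot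
  have hn : 0 < p.natDegree := by
    rcases Nat.eq_zero_or_pos p.natDegree with h | h
    · exact absurd (hmonic.natDegree_eq_zero.1 h ▸ isUnit_one) hirr.not_isUnit
    · exact h
  choose slope next hadm hmaxs hstep1 hstep2 using
    fun x => HahnAC.exists_slope hdiv hmonic hn x (hroot x)
  set Pair : HahnSeries G K → HahnSeries G K → Prop := fun a b =>
    ((slope a : WithTop G) ≤ (b - a).orderTop ∧ (p.eval a).orderTop < (p.eval b).orderTop)
    with hPdef
  have hmono : ∀ a b, Pair a b → slope a < slope b := by
    intro a b hab
    obtain ⟨i, hi1, hin, hile⟩ := HahnAC.grow (hroot a) hab.1 hab.2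
    exact hmaxs b (slope a) i hi1 hin (lt_of_le_of_lt hile hab.2)
  have htrans_ball : ∀ a b z, Pair a b → ((slope b : WithTop G) ≤ (z - b).orderTop) →
      ((p.eval b).orderTop < (p.eval z).orderTop) → Pair a z := by
    intro a b z hab hzb hvz
    constructor
    · have h1 : z - a = (z - b) + (b - a) := by ring
      rw [h1]
      refine le_trans (le_min (le_trans ?_ hzb) hab.1) HahnSeries.min_orderTop_le_orderTop_add
      exact WithTop.coe_le_coe.2 (le_of_lt (hmono a b hab))
    · exact lt_trans hab.2 hvz
  set step : ∀ o : Ordinal.{v}, (∀ β : Ordinal.{v}, β < o → HahnSeries G K) → HahnSeries G K :=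
    fun o ih =>
      if h : ∃ z : HahnSeries G K, ∀ β (hb : β < o), Pair (ih β hb) z then h.choose else 0
    with hstepdef
  set seq : Ordinal.{v} → HahnSeries G K := Ordinal.lt_wf.fix step with hseqdef
  have hseq_eq : ∀ o, seq o = step o (fun β _ => seq β) := fun o =>
    Ordinal.lt_wf.fix_eq step o
  have key : ∀ o : Ordinal.{v}, ∀ β < o, Pair (seq β) (seq o) := by
    intro o
    induction o using Ordinal.induction with
    | _ o ih =>
    have hex : ∃ z : HahnSeries G K, ∀ β (hb : β < o), Pair (seq β) z := by
      rcases Ordinal.zero_or_succ_or_isSuccLimit o with rfl | ⟨a, rfl⟩ | hlim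
      · exact ⟨0, fun β hb => absurd hb (not_lt_of_ge (zero_le (a := β)))⟩
      · refine ⟨next (seq a), fun β hb => ?_⟩
        rcases lt_or_eq_of_le (Order.lt_succ_iff.1 hb) with hba | rfl
        · exact htrans_ball _ _ _ (ih a (Order.lt_succ a) β hba) (hstep1 _) (hstep2 _)
        · exact ⟨hstep1 (seq β), hstep2 (seq β)⟩
      · haveI : Nonempty {β : Ordinal.{v} // β < o} := ⟨⟨0, hlim.pos⟩⟩
        have hch : ∀ i j : {β : Ordinal.{v} // β < o},
            slope (seq i.1) ≤ slope (seq j.1) →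
            ((slope (seq i.1) : WithTop G)) ≤ (seq j.1 - seq i.1).orderTop := by
          intro i j hij
          rcases lt_trichotomy i.1 j.1 with h | h | h
          · exact (ih j.1 j.2 i.1 h).1
          · have : seq j.1 - seq i.1 = 0 := by rw [h, sub_self]
            rw [this, HahnSeries.orderTop_zero]
            exact le_top
          · exact absurd hij (not_le.2 (hmono _ _ (ih i.1 i.2 j.1 h)))
        obtain ⟨y, hy⟩ := HahnAC.spherically_complete
          (fun i : {β : Ordinal.{v} // β < o} => seq i.1)
          (fun i => slope (seq i.1)) hch
        refine ⟨y, fun β hb => ?_⟩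
        refine ⟨hy ⟨β, hb⟩, ?_⟩
        have hsucc : Order.succ β < o := hlim.succ_lt hb
        have hp1 : Pair (seq β) (seq (Order.succ β)) := ih _ hsucc β (Order.lt_succ β)
        refine lt_of_lt_of_le hp1.2 ?_
        exact HahnAC.adm_eval_le (hadm (seq (Order.succ β))) (hy ⟨Order.succ β, hsucc⟩)
    intro β hb
    have hchoose : seq o = hex.choose := by
      rw [hseq_eq o]
      exact dif_pos hex
    rw [hchoose]
    exact hex.choose_spec β hb
  have hstrict : ∀ α β : Ordinal.{v}, α < β → slope (seq α) < slope (seq β) :=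
    fun α β h => hmono _ _ (key β α h)
  have hinj : Function.Injective (fun o : Ordinal.{v} => slope (seq o)) := by
    intro a b hab
    rcases lt_trichotomy a b with h | h | h
    · exact absurd hab (ne_of_lt (hstrict a b h))
    · exact h
    · exact absurd hab.symm (ne_of_lt (hstrict b a h))
  exact not_small_ordinal.{v} (small_of_injective hinj)

end HahnAC

/-- If `K` is an algebraically closed field and `G` a divisible linearly ordered abelian
group, then the Hahn series field `K((t^G))` is algebraically closed. -/
theorem hahnSeries_isAlgClosed (K G : Type*) [Field K] [IsAlgClosed K]
    [AddCommGroup G] [LinearOrder G] [IsOrderedAddMonoid G]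
    (hdiv : ∀ (g : G) (n : ℕ), 0 < n → ∃ h : G, n • h = g) :
    IsAlgClosed (HahnSeries G K) :=
  HahnAC.main hdiv
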